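/- Let u and v be two quasi-definite moment functionals on Π^d, and let {ℙ_n}_{n≥0} and {ℚ_n}_{n≥0} be the monic OPS associated with u and v, respectively. The following statements are equivalent: (1) there exists a polynomial λ(x) of exact total degree 2 such that v = λ(x)u, i.e., ⟨v,p⟩ = ⟨u, λp⟩ for all p ∈ Π^d; (2) for every n ≥ 1 there exist matrices M_n ∈ M_{r_n^d × r_{n−1}^d}(ℝ) and N_n ∈ M_{r_n^d × r_{n−2}^d}(ℝ) (n ≥ 2), with N_2 ≠ 0, such that ℙ_n = ℚ_n + M_n ℚ_{n−1} + N_n ℚ_{n−2} (where ℚ_{−1} = 0 and the N_n term is absent for n = 1). -/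

import Mathlib

open MvPolynomial Matrix

/-- The index set for monomials of total degree `n` in `d` variables:
multi-indices (exponent tuples) summing to `n`. Its cardinality is `r_n^d = C(n+d-1,n)`. -/
abbrev Idx (d n : ℕ) : Type := {ν : Fin d → ℕ // ν ∈ Finset.Nat.antidiagonalTuple d n}

/-- The monomial `x^ν` associated with a multi-index `ν` of total degree `n`;
the family `fun α : Idx d n => monIdx α` is the canonical vector `𝕏_n`. -/
noncomputable def monIdx {d n : ℕ} (α : Idx d n) : MvPolynomial (Fin d) ℝ :=
  MvPolynomial.monomial (Finsupp.equivFunOnFinite.symm α.1) 1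

/-- A polynomial system (PS): a sequence of vectors `ℙ_n` of size `r_n^d` whose
entries are polynomials of total degree `n`, the entries of `ℙ_0,…,ℙ_n` forming a
basis of the polynomials of total degree at most `n`. -/
structure PolySystem (d : ℕ) where
  vec : (n : ℕ) → Idx d n → MvPolynomial (Fin d) ℝ
  degree_eq : ∀ n α, (vec n α).totalDegree = n
  indep : LinearIndependent ℝ (fun p : (Σ n : ℕ, Idx d n) => vec p.1 p.2)
  spans : ∀ (n : ℕ) (p : MvPolynomial (Fin d) ℝ), p.totalDegree ≤ n →
    p ∈ Submodule.span ℝ {q | ∃ m ≤ n, ∃ α : Idx d m, q = vec m α}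

/-- `{ℙ_n}` is an orthogonal polynomial system (OPS) with respect to the moment
functional `u` : `⟨u, 𝕏_m ℙ_n^t⟩ = 0` for `m < n` and `⟨u, 𝕏_n ℙ_n^t⟩` nonsingular. -/
def IsOPS {d : ℕ} (u : MvPolynomial (Fin d) ℝ →ₗ[ℝ] ℝ) (P : PolySystem d) : Prop :=
  (∀ m n : ℕ, m < n → ∀ (α : Idx d m) (β : Idx d n), u (monIdx α * P.vec n β) = 0) ∧
  (∀ n : ℕ, IsUnit (Matrix.of fun α β : Idx d n => u (monIdx α * P.vec n β)).det)

/-- `u` is quasi-definite iff it admits an OPS. -/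
def QuasiDefinite {d : ℕ} (u : MvPolynomial (Fin d) ℝ →ₗ[ℝ] ℝ) : Prop :=
  ∃ P : PolySystem d, IsOPS u P

/-- `H_n = ⟨u, ℙ_n ℙ_n^t⟩`. -/
noncomputable def Hmat {d : ℕ} (u : MvPolynomial (Fin d) ℝ →ₗ[ℝ] ℝ) (P : PolySystem d)
    (n : ℕ) : Matrix (Idx d n) (Idx d n) ℝ :=
  Matrix.of fun α β => u (P.vec n α * P.vec n β)

/-- `P_m(u;x,y) = ℙ_m(x)^t H_m⁻¹ ℙ_m(y)`. -/
noncomputable def kerP {d : ℕ} (u : MvPolynomial (Fin d) ℝ →ₗ[ℝ] ℝ) (P : PolySystem d)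
    (m : ℕ) (x y : Fin d → ℝ) : ℝ :=
  ∑ α, ∑ β, eval x (P.vec m α) * (Hmat u P m)⁻¹ α β * eval y (P.vec m β)

/-- `kerLT u P n = K_{n-1}(u;·,·) = Σ_{m<n} P_m(u;·,·)`, so that `kerLT u P 0 = K_{-1} = 0`. -/
noncomputable def kerLT {d : ℕ} (u : MvPolynomial (Fin d) ℝ →ₗ[ℝ] ℝ) (P : PolySystem d)
    (n : ℕ) (x y : Fin d → ℝ) : ℝ :=
  ∑ m ∈ Finset.range n, kerP u P m x y

/-- `𝖯_n(ξ) = (ℙ_n(ξ_1)|⋯|ℙ_n(ξ_N))`. -/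
noncomputable def Pmat {d N : ℕ} (P : PolySystem d) (ξ : Fin N → (Fin d → ℝ)) (n : ℕ) :
    Matrix (Idx d n) (Fin N) ℝ :=
  Matrix.of fun α i => eval (ξ i) (P.vec n α)

/-- `Kmat u P ξ n = 𝒦_{n-1} = (K_{n-1}(u;ξ_i,ξ_j))_{i,j}`, with `𝒦_{-1} = 0`. -/
noncomputable def Kmat {d N : ℕ} (u : MvPolynomial (Fin d) ℝ →ₗ[ℝ] ℝ) (P : PolySystem d)
    (ξ : Fin N → (Fin d → ℝ)) (n : ℕ) : Matrix (Fin N) (Fin N) ℝ :=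
  Matrix.of fun i j => kerLT u P n (ξ i) (ξ j)

/-- `Kvec u P ξ n x = 𝖪_{n-1}(ξ,x) = (K_{n-1}(u;ξ_1,x),…,K_{n-1}(u;ξ_N,x))^t`, with `𝖪_{-1}=0`. -/
noncomputable def Kvec {d N : ℕ} (u : MvPolynomial (Fin d) ℝ →ₗ[ℝ] ℝ) (P : PolySystem d)
    (ξ : Fin N → (Fin d → ℝ)) (n : ℕ) (x : Fin d → ℝ) : Fin N → ℝ :=
  fun i => kerLT u P n (ξ i) x

/-- A PS is monic if the degree-`n` homogeneous part of the entry of `ℙ_n` indexed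
by `α` is exactly the monomial `x^α`. -/
def PolySystem.IsMonic {d : ℕ} (P : PolySystem d) : Prop :=
  ∀ (n : ℕ) (α : Idx d n) (ν : Fin d →₀ ℕ), (ν.sum fun _ e => e) = n →
    MvPolynomial.coeff ν (P.vec n α) = if ν = Finsupp.equivFunOnFinite.symm α.1 then 1 else 0

/-- Multiplication of a real matrix times a vector of polynomials. -/
noncomputable def matVec {d : ℕ} {a b : Type} [Fintype b] (M : Matrix a b ℝ)
    (w : b → MvPolynomial (Fin d) ℝ) (i : a) : MvPolynomial (Fin d) ℝ :=
  ∑ j, M i j • w j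

/-- The matrix `L_{n,i}` determined by `x_i 𝕏_n = L_{n,i} 𝕏_{n+1}`. -/
noncomputable def Lmat (d n : ℕ) (i : Fin d) : Matrix (Idx d n) (Idx d (n + 1)) ℝ :=
  Matrix.of fun α β => if β.1 = (fun j => α.1 j + if j = i then 1 else 0) then 1 else 0

/-- The unique multi-index of degree 0. -/
def zeroIdx {d : ℕ} : Idx d 0 :=
  ⟨fun _ => 0, by simp [Finset.Nat.mem_antidiagonalTuple]⟩

/-- The degree-2 multi-index `e_i + e_j`. -/
def e2 {d : ℕ} (i j : Fin d) : Idx d 2 :=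
  ⟨fun k => (if k = i then 1 else 0) + (if k = j then 1 else 0), by
    simp [Finset.Nat.mem_antidiagonalTuple, Finset.sum_add_distrib]⟩

/-- `A_{h,2} = Σ_{1≤i≤j≤d} a^{(2)}_{ij} L_{h,j} L_{h+1,i}`. -/
noncomputable def Amat2 {d : ℕ} (a2 : Idx d 2 → ℝ) (h : ℕ) :
    Matrix (Idx d h) (Idx d (h + 2)) ℝ :=
  ∑ i : Fin d, ∑ j : Fin d,
    if i ≤ j then a2 (e2 i j) • (Lmat d h j * Lmat d (h + 1) i) else 0

/-- The polynomial `λ(x) = a_2·𝕏_2 + a_1·𝕏_1 + a_0`. -/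
noncomputable def lamPoly {d : ℕ} (a2 : Idx d 2 → ℝ) (a1 : Idx d 1 → ℝ) (a0 : ℝ) :
    MvPolynomial (Fin d) ℝ :=
  (∑ α : Idx d 2, a2 α • monIdx α) + (∑ α : Idx d 1, a1 α • monIdx α) + MvPolynomial.C a0

lemma sumNu {d : ℕ} (ν : Fin d →₀ ℕ) : (ν.sum fun _ e => e) = ∑ i, ν i :=
  Finsupp.sum_fintype _ _ (fun _ => rfl)

lemma mem_idx {d : ℕ} (ν : Fin d →₀ ℕ) : ⇑ν ∈ Finset.Nat.antidiagonalTuple d (∑ i, ν i) := by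
  simp [Finset.Nat.mem_antidiagonalTuple]

lemma monomial_eq_monIdx {d : ℕ} (ν : Fin d →₀ ℕ) :
    monomial ν (1:ℝ) = monIdx (⟨⇑ν, mem_idx ν⟩ : Idx d (∑ i, ν i)) := by
  unfold monIdx
  rw [show ((⟨⇑ν, mem_idx ν⟩ : Idx d (∑ i, ν i)) : Idx d (∑ i, ν i)).1 = ⇑ν from rfl,
    Finsupp.equivFunOnFinite_symm_coe ν]

lemma idx_sum {d n : ℕ} (α : Idx d n) : ∑ i, α.1 i = n :=
  Finset.Nat.mem_antidiagonalTuple.mp α.2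

lemma supp_le_totalDegree {d : ℕ} {q : MvPolynomial (Fin d) ℝ} {ν : Fin d →₀ ℕ}
    (h : ν ∈ q.support) : ∑ i, ν i ≤ q.totalDegree := by
  rw [← sumNu]; exact le_totalDegree h

lemma coeff_zero_of_lt {d : ℕ} {q : MvPolynomial (Fin d) ℝ} {ν : Fin d →₀ ℕ}
    (h : q.totalDegree < ∑ i, ν i) : coeff ν q = 0 := by
  by_contra hc
  exact absurd (supp_le_totalDegree (by simpa [mem_support_iff] using hc)) (not_le.mpr h)

lemma totalDegree_le_of_supp {d : ℕ} {q : MvPolynomial (Fin d) ℝ} {k : ℕ}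
    (h : ∀ ν ∈ q.support, ∑ i, ν i ≤ k) : q.totalDegree ≤ k := by
  apply Finset.sup_le
  intro ν hν
  rw [sumNu]; exact h ν hν

section Orth
variable {d : ℕ} {u : MvPolynomial (Fin d) ℝ →ₗ[ℝ] ℝ} {P : PolySystem d}

/-- Orthogonality of `ℙ_n` against any polynomial supported in degrees `< n`. -/
lemma ops_orth (hP : IsOPS u P) {q : MvPolynomial (Fin d) ℝ} {n : ℕ}
    (hq : ∀ ν ∈ q.support, ∑ i, ν i < n) (β : Idx d n) : u (q * P.vec n β) = 0 := by
  conv_lhs => rw [q.as_sum]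
  rw [Finset.sum_mul, map_sum]
  apply Finset.sum_eq_zero
  intro ν hν
  have h1 : (monomial ν) (coeff ν q) = (coeff ν q) • monomial ν (1:ℝ) := by
    rw [smul_monomial, smul_eq_mul, mul_one]
  rw [h1, smul_mul_assoc, _root_.map_smul, smul_eq_mul,
    monomial_eq_monIdx ν, hP.1 _ n (hq ν hν) _ β, mul_zero]

lemma ops_orth' (hP : IsOPS u P) {q : MvPolynomial (Fin d) ℝ} {n : ℕ}
    (hq : q.totalDegree < n) (β : Idx d n) : u (q * P.vec n β) = 0 :=
  ops_orth hP (fun ν hν => lt_of_le_of_lt (supp_le_totalDegree hν) hq) β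

/-- Orthogonality between `ℙ_m` and `ℙ_n` for `m ≠ n`. -/
lemma ops_orth_vec (hP : IsOPS u P) {m n : ℕ} (hmn : m ≠ n) (α : Idx d m) (β : Idx d n) :
    u (P.vec m α * P.vec n β) = 0 := by
  rcases lt_or_gt_of_ne hmn with h | h
  · exact ops_orth' hP (by rw [P.degree_eq]; exact h) β
  · rw [mul_comm]
    exact ops_orth' hP (by rw [P.degree_eq]; exact h) α

/-- For a monic PS, `ℙ_n α - x^α` has all coefficients of degree `≥ n` zero. -/
lemma sub_mon_supp (hPm : P.IsMonic) {n : ℕ} (α : Idx d n) :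
    ∀ ν ∈ (P.vec n α - monIdx α).support, ∑ i, ν i < n := by
  intro ν hν
  by_contra h
  push_neg at h
  apply (mem_support_iff.mp hν)
  rw [coeff_sub]
  rcases eq_or_lt_of_le h with heq | hlt
  · rw [hPm n α ν (by rw [sumNu]; exact heq.symm)]
    unfold monIdx
    rw [coeff_monomial]
    by_cases hc : ν = Finsupp.equivFunOnFinite.symm α.1
    · rw [if_pos hc, if_pos hc.symm, sub_self]
    · rw [if_neg hc, if_neg (fun h => hc h.symm), sub_self]
  · rw [coeff_zero_of_lt (by rw [P.degree_eq]; exact hlt)]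
    have hne : Finsupp.equivFunOnFinite.symm α.1 ≠ ν := by
      intro hc
      have : ∑ i, ν i = n := by
        rw [← hc]
        simpa [sumNu] using idx_sum α
      omega
    unfold monIdx
    rw [coeff_monomial, if_neg hne, sub_zero]

/-- `H_n` has the same entries as the nonsingular matrix `⟨u, 𝕏_n ℙ_n^t⟩`. -/
lemma Hmat_eq (hP : IsOPS u P) (hPm : P.IsMonic) (n : ℕ) :
    Hmat u P n = Matrix.of fun α β : Idx d n => u (monIdx α * P.vec n β) := by
  ext α β
  show u (P.vec n α * P.vec n β) = u (monIdx α * P.vec n β)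
  have : P.vec n α * P.vec n β = monIdx α * P.vec n β + (P.vec n α - monIdx α) * P.vec n β := by
    ring
  rw [this, map_add, ops_orth hP (sub_mon_supp hPm α) β, add_zero]

lemma Hmat_isUnit (hP : IsOPS u P) (hPm : P.IsMonic) (n : ℕ) :
    IsUnit (Hmat u P n).det := by
  rw [Hmat_eq hP hPm]; exact hP.2 n

lemma Hmat_symm (n : ℕ) (α β : Idx d n) : Hmat u P n α β = Hmat u P n β α := by
  show u _ = u _
  rw [mul_comm]

end Orth

section BasisSec
variable {d : ℕ}

lemma span_set_eq (P : PolySystem d) (n : ℕ) :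
    {q | ∃ m ≤ n, ∃ α : Idx d m, q = P.vec m α} =
      (fun σ : Σ m : ℕ, Idx d m => P.vec σ.1 σ.2) '' {σ | σ.1 ≤ n} := by
  ext q
  constructor
  · rintro ⟨m, hm, α, rfl⟩
    exact ⟨⟨m, α⟩, hm, rfl⟩
  · rintro ⟨⟨m, α⟩, hm, rfl⟩
    exact ⟨m, hm, α, rfl⟩

noncomputable def psBasis (P : PolySystem d) :
    Module.Basis (Σ n : ℕ, Idx d n) ℝ (MvPolynomial (Fin d) ℝ) :=
  Module.Basis.mk P.indep (by
    intro p _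
    apply Submodule.span_mono _ (P.spans p.totalDegree p le_rfl)
    rw [span_set_eq]
    exact Set.image_subset_range _ _)

lemma psBasis_apply (P : PolySystem d) (σ : Σ n : ℕ, Idx d n) :
    psBasis P σ = P.vec σ.1 σ.2 := by
  rw [psBasis, Module.Basis.coe_mk]

/-- Support of the representation lies in degrees `≤ k` when the polynomial has
total degree `≤ k`. -/
lemma repr_supp_le (P : PolySystem d) {p : MvPolynomial (Fin d) ℝ} {k : ℕ}
    (hp : p.totalDegree ≤ k) :
    ∀ σ ∈ ((psBasis P).repr p).support, σ.1 ≤ k := by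
  have hmem : p ∈ Submodule.span ℝ (⇑(psBasis P) '' {σ : Σ n : ℕ, Idx d n | σ.1 ≤ k}) := by
    have := P.spans k p hp
    rw [span_set_eq] at this
    convert this using 3
    ext σ
    rw [psBasis_apply]
  intro σ hσ
  exact (Module.Basis.mem_span_image _).mp hmem hσ

/-- If `v (p * ℚ_m β) = 0` for all `β`, then the degree-`m` coefficients of `p`
in the `Q`-expansion vanish. -/
lemma repr_zero_of_orth {v : MvPolynomial (Fin d) ℝ →ₗ[ℝ] ℝ} {Q : PolySystem d}
    (hQ : IsOPS v Q) (hQm : Q.IsMonic) {p : MvPolynomial (Fin d) ℝ} {m : ℕ}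
    (h : ∀ β : Idx d m, v (p * Q.vec m β) = 0) :
    ∀ β : Idx d m, ((psBasis Q).repr p) ⟨m, β⟩ = 0 := by
  classical
  set c := (psBasis Q).repr p with hc
  set g : Idx d m → ℝ := fun β => c ⟨m, β⟩ with hg
  have key : ∀ β : Idx d m, (g ᵥ* Hmat v Q m) β = 0 := by
    intro β
    have hp : p = ∑ σ ∈ c.support, c σ • Q.vec σ.1 σ.2 := by
      conv_lhs => rw [← (psBasis Q).linearCombination_repr p]
      rw [Finsupp.linearCombination_apply, Finsupp.sum]
      exact Finset.sum_congr rfl (fun σ _ => by rw [psBasis_apply])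
    have h0 := h β
    rw [hp, Finset.sum_mul, map_sum] at h0
    set f : (Σ n : ℕ, Idx d n) → ℝ := fun σ => c σ * v (Q.vec σ.1 σ.2 * Q.vec m β) with hf
    have hterm : ∀ σ ∈ c.support, v ((c σ • Q.vec σ.1 σ.2) * Q.vec m β) = f σ := by
      intro σ _
      rw [smul_mul_assoc, _root_.map_smul, smul_eq_mul]
    rw [Finset.sum_congr rfl hterm] at h0
    set T : Finset (Σ n : ℕ, Idx d n) :=
      c.support ∪ (Finset.sigma {m} fun _ => Finset.univ) with hT
    have h1 : ∑ σ ∈ c.support, f σ = ∑ σ ∈ T, f σ := by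
      apply Finset.sum_subset Finset.subset_union_left
      intro σ _ hσ
      simp only [Finsupp.mem_support_iff, not_not] at hσ
      simp [hf, hσ]
    have h2 : ∑ σ ∈ (Finset.sigma {m} fun _ => Finset.univ), f σ = ∑ σ ∈ T, f σ := by
      apply Finset.sum_subset Finset.subset_union_right
      intro σ hσT hσ
      have hσ1 : σ.1 ≠ m := by
        intro hc1
        apply hσ
        rw [Finset.mem_sigma]
        exact ⟨by simp [hc1], Finset.mem_univ _⟩
      simp [hf, ops_orth_vec hQ hσ1]
    have h3 : ∑ σ ∈ (Finset.sigma {m} fun _ => Finset.univ), f σ =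
        ∑ β' : Idx d m, g β' * Hmat v Q m β' β := by
      rw [Finset.sum_sigma]
      simp [hf, hg, Hmat]
    have : ∑ β' : Idx d m, g β' * Hmat v Q m β' β = 0 := by
      rw [← h3, h2, ← h1, h0]
    simpa [Matrix.vecMul, dotProduct] using this
  have hunit := Hmat_isUnit hQ hQm (n := m)
  have hzero : g = 0 := by
    have hgv : g ᵥ* Hmat v Q m = 0 := funext key
    have := congrArg (fun w => w ᵥ* (Hmat v Q m)⁻¹) hgv
    simpa [Matrix.vecMul_vecMul, Matrix.mul_nonsing_inv _ hunit] using this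
  intro β
  exact congrFun hzero β

end BasisSec

section Expand
variable {d : ℕ}

lemma expand_repr (Q : PolySystem d) (p : MvPolynomial (Fin d) ℝ) (S : Finset ℕ)
    (h : ∀ σ ∈ ((psBasis Q).repr p).support, σ.1 ∈ S) :
    p = ∑ m ∈ S, ∑ β : Idx d m, ((psBasis Q).repr p) ⟨m, β⟩ • Q.vec m β := by
  classical
  conv_lhs => rw [← (psBasis Q).linearCombination_repr p]
  rw [Finsupp.linearCombination_apply]
  rw [Finsupp.sum_of_support_subset ((psBasis Q).repr p) (s := S.sigma fun _ => Finset.univ)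
    (fun σ hσ => Finset.mem_sigma.mpr ⟨h σ hσ, Finset.mem_univ _⟩)
    (fun i a => a • (psBasis Q) i) (fun i _ => zero_smul ℝ _)]
  rw [Finset.sum_sigma]
  exact Finset.sum_congr rfl fun m _ => Finset.sum_congr rfl fun β _ => by rw [psBasis_apply]

def zeroIdx' {d : ℕ} : Idx d 0 :=
  ⟨fun _ => 0, by simp [Finset.Nat.mem_antidiagonalTuple]⟩

instance : Unique (Idx d 0) where
  default := zeroIdx'
  uniq := by
    rintro ⟨ν, hν⟩
    have h : ∀ i, ν i = 0 := by
      rw [Finset.Nat.mem_antidiagonalTuple] at hν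
      intro i
      exact Finset.sum_eq_zero_iff.mp hν i (Finset.mem_univ i)
    apply Subtype.ext
    funext i
    exact h i

lemma monIdx_zero (α : Idx d 0) : monIdx α = 1 := by
  have : α = zeroIdx' := Unique.uniq _ α
  subst this
  unfold monIdx
  have : (Finsupp.equivFunOnFinite.symm (zeroIdx' (d := d)).1) = 0 := by
    apply Finsupp.ext
    intro i
    rfl
  rw [this, monomial_zero']
  simp

variable {v : MvPolynomial (Fin d) ℝ →ₗ[ℝ] ℝ} {Q : PolySystem d}

lemma ops_apply_zero (hQ : IsOPS v Q) {m : ℕ} (hm : 0 < m) (β : Idx d m) :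
    v (Q.vec m β) = 0 := by
  have := hQ.1 0 m hm zeroIdx' β
  rwa [monIdx_zero, one_mul] at this

lemma ops_apply_zero_ne (hQ : IsOPS v Q) (β : Idx d 0) : v (Q.vec 0 β) ≠ 0 := by
  have h := hQ.2 0
  rw [Matrix.det_unique] at h
  have : (Matrix.of fun α β : Idx d 0 => v (monIdx α * Q.vec 0 β)) default default
      = v (Q.vec 0 default) := by
    rw [Matrix.of_apply, monIdx_zero, one_mul]
  rw [this] at h
  have hβ : β = default := Unique.uniq _ β
  rw [hβ]
  exact h.ne_zero

end Expand

section Forward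
variable {d : ℕ} {u v : MvPolynomial (Fin d) ℝ →ₗ[ℝ] ℝ} {P Q : PolySystem d}

lemma diff_coeff_hi (hPm : P.IsMonic) (hQm : Q.IsMonic) {n : ℕ} (α : Idx d n)
    {ν : Fin d →₀ ℕ} (hν : n ≤ ∑ i, ν i) :
    coeff ν (P.vec n α - Q.vec n α) = 0 := by
  rw [coeff_sub]
  rcases eq_or_lt_of_le hν with heq | hlt
  · rw [hPm n α ν (by rw [sumNu]; exact heq.symm), hQm n α ν (by rw [sumNu]; exact heq.symm),
      sub_self]
  · rw [coeff_zero_of_lt (by rw [P.degree_eq]; exact hlt),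
      coeff_zero_of_lt (by rw [Q.degree_eq]; exact hlt), sub_self]

lemma diff_totalDegree (hPm : P.IsMonic) (hQm : Q.IsMonic) {n k : ℕ} (hk : n ≤ k + 1)
    (α : Idx d n) : (P.vec n α - Q.vec n α).totalDegree ≤ k := by
  apply totalDegree_le_of_supp
  intro ν hν
  by_contra h
  push_neg at h
  have : n ≤ ∑ i, ν i := by omega
  exact mem_support_iff.mp hν (diff_coeff_hi hPm hQm α this)

lemma diff_orth (hP : IsOPS u P) (hQ : IsOPS v Q) {lam : MvPolynomial (Fin d) ℝ}
    (hdeg : lam.totalDegree = 2) (hlam : ∀ p, v p = u (lam * p)) {n m : ℕ}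
    (hmn : m + 3 ≤ n) (α : Idx d n) (β : Idx d m) :
    v ((P.vec n α - Q.vec n α) * Q.vec m β) = 0 := by
  rw [sub_mul, map_sub]
  have h1 : v (P.vec n α * Q.vec m β) = 0 := by
    rw [hlam]
    have : lam * (P.vec n α * Q.vec m β) = (lam * Q.vec m β) * P.vec n α := by ring
    rw [this]
    apply ops_orth' hP _ α
    calc (lam * Q.vec m β).totalDegree ≤ lam.totalDegree + (Q.vec m β).totalDegree :=
          totalDegree_mul _ _
      _ = 2 + m := by rw [hdeg, Q.degree_eq]
      _ < n := by omega
  have h2 : v (Q.vec n α * Q.vec m β) = 0 :=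
    ops_orth_vec hQ (by omega) α β
  rw [h1, h2, sub_self]

lemma exists_vP2_ne (hP : IsOPS u P) {lam : MvPolynomial (Fin d) ℝ}
    (hdeg : lam.totalDegree = 2) (hlam : ∀ p, v p = u (lam * p)) :
    ∃ α : Idx d 2, v (P.vec 2 α) ≠ 0 := by
  classical
  by_contra hcon
  push_neg at hcon
  set a : Idx d 2 → ℝ := fun β => coeff (Finsupp.equivFunOnFinite.symm β.1) lam with ha
  set r : MvPolynomial (Fin d) ℝ := lam - ∑ β : Idx d 2, a β • monIdx β with hr
  -- r is supported in degrees < 2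
  have hrs : ∀ ν ∈ r.support, ∑ i, ν i < 2 := by
    intro ν hν
    by_contra hge
    push_neg at hge
    apply mem_support_iff.mp hν
    rw [hr, coeff_sub]
    have hcs : coeff ν (∑ β : Idx d 2, a β • monIdx β) =
        ∑ β : Idx d 2, a β * (if Finsupp.equivFunOnFinite.symm β.1 = ν then 1 else 0) := by
      rw [coeff_sum]
      exact Finset.sum_congr rfl fun β _ => by
        rw [coeff_smul, smul_eq_mul]
        unfold monIdx
        rw [coeff_monomial]
    rcases eq_or_lt_of_le hge with heq | hlt
    · have hν2 : ⇑ν ∈ Finset.Nat.antidiagonalTuple d 2 := by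
        rw [Finset.Nat.mem_antidiagonalTuple, heq]
      set β0 : Idx d 2 := ⟨⇑ν, hν2⟩ with hβ0
      have hiff : ∀ β : Idx d 2, (Finsupp.equivFunOnFinite.symm β.1 = ν) ↔ β = β0 := by
        intro β
        constructor
        · intro h
          apply Subtype.ext
          show β.1 = ⇑ν
          rw [← h]
          rfl
        · intro h
          rw [h]
          exact Finsupp.equivFunOnFinite_symm_coe ν
      have : coeff ν (∑ β : Idx d 2, a β • monIdx β) = a β0 := by
        rw [hcs]
        rw [Finset.sum_congr rfl (fun β _ => by
          rw [show (if Finsupp.equivFunOnFinite.symm β.1 = ν then (1:ℝ) else 0)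
              = (if β = β0 then 1 else 0) by simp [hiff β]])]
        simp [Finset.sum_ite_eq']
      rw [this]
      have : a β0 = coeff ν lam := by
        rw [ha]
        show coeff (Finsupp.equivFunOnFinite.symm ⇑ν) lam = coeff ν lam
        rw [Finsupp.equivFunOnFinite_symm_coe]
      rw [this, sub_self]
    · rw [coeff_zero_of_lt (by rw [hdeg]; exact hlt), hcs]
      rw [Finset.sum_eq_zero, sub_zero]
      intro β _
      rw [if_neg, mul_zero]
      intro h
      have : ∑ i, ν i = 2 := by
        rw [← h]
        have : ∀ i, (Finsupp.equivFunOnFinite.symm β.1) i = β.1 i := fun i => rfl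
        simp only [this]
        exact idx_sum β
      omega
  -- the row vector a annihilates the nonsingular matrix of hP.2
  set S : Matrix (Idx d 2) (Idx d 2) ℝ :=
    Matrix.of fun γ β : Idx d 2 => u (monIdx γ * P.vec 2 β) with hS
  have hvec : ∀ α : Idx d 2, (a ᵥ* S) α = 0 := by
    intro α
    have h0 : u (lam * P.vec 2 α) = 0 := by rw [← hlam]; exact hcon α
    have hsplit : lam = (∑ β : Idx d 2, a β • monIdx β) + r := by rw [hr]; ring
    rw [hsplit, add_mul, map_add, ops_orth hP hrs α] at h0
    rw [Finset.sum_mul, map_sum] at h0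
    have : ∀ β ∈ Finset.univ, u ((a β • monIdx β) * P.vec 2 α) = a β * S β α := by
      intro β _
      rw [smul_mul_assoc, _root_.map_smul, smul_eq_mul]
      rfl
    rw [Finset.sum_congr rfl this, add_zero] at h0
    simpa [Matrix.vecMul, dotProduct] using h0
  have ha0 : a = 0 := by
    have hgv : a ᵥ* S = 0 := funext hvec
    have := congrArg (fun w => w ᵥ* S⁻¹) hgv
    simpa [Matrix.vecMul_vecMul, Matrix.mul_nonsing_inv S (hP.2 2)] using this
  -- but lam has a nonzero coefficient in degree 2
  have hlne : lam ≠ 0 := by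
    intro h
    rw [h, totalDegree_zero] at hdeg
    omega
  obtain ⟨ν, hνs, hνd⟩ := Finset.exists_mem_eq_sup lam.support
    ((MvPolynomial.support_nonempty.mpr hlne)) (fun ν => ν.sum fun _ e => e)
  have hν2 : ∑ i, ν i = 2 := by
    rw [← sumNu, ← hνd, ← MvPolynomial.totalDegree, hdeg]
  have : a ⟨⇑ν, by rw [Finset.Nat.mem_antidiagonalTuple, hν2]⟩ = coeff ν lam := by
    rw [ha]
    show coeff (Finsupp.equivFunOnFinite.symm ⇑ν) lam = coeff ν lam
    rw [Finsupp.equivFunOnFinite_symm_coe]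
  rw [ha0] at this
  exact mem_support_iff.mp hνs this.symm

end Forward

section ForwardMain
variable {d : ℕ} {u v : MvPolynomial (Fin d) ℝ →ₗ[ℝ] ℝ} {P Q : PolySystem d}

lemma forward_dir (hP : IsOPS u P) (hPm : P.IsMonic) (hQ : IsOPS v Q) (hQm : Q.IsMonic)
    (lam : MvPolynomial (Fin d) ℝ) (hdeg : lam.totalDegree = 2)
    (hlam : ∀ p, v p = u (lam * p)) :
    (∃ (M : (n : ℕ) → Matrix (Idx d (n + 1)) (Idx d n) ℝ)
        (Nmat : (n : ℕ) → Matrix (Idx d (n + 2)) (Idx d n) ℝ),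
      Nmat 0 ≠ 0 ∧
      (∀ α : Idx d 1, P.vec 1 α = Q.vec 1 α + matVec (M 0) (Q.vec 0) α) ∧
      (∀ (n : ℕ) (α : Idx d (n + 2)),
        P.vec (n + 2) α = Q.vec (n + 2) α + matVec (M (n + 1)) (Q.vec (n + 1)) α +
          matVec (Nmat n) (Q.vec n) α)) := by
  classical
  set c : (n : ℕ) → Idx d n → ((m : ℕ) × Idx d m →₀ ℝ) :=
    fun n α => (psBasis Q).repr (P.vec n α - Q.vec n α) with hc
  refine ⟨fun n => Matrix.of fun α β => c (n+1) α ⟨n, β⟩,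
    fun n => Matrix.of fun α β => c (n+2) α ⟨n, β⟩, ?_, ?_, ?_⟩
  · -- N_2 ≠ 0
    intro hN
    obtain ⟨α0, hα0⟩ := exists_vP2_ne hP hdeg hlam
    apply hα0
    have hent : ∀ (β : Idx d 0), c 2 α0 ⟨0, β⟩ = 0 := by
      intro β
      have := congrFun (congrFun hN α0) β
      simpa using this
    have hsupp : ∀ σ ∈ (c 2 α0).support, σ.1 ∈ ({0, 1} : Finset ℕ) := by
      intro σ hσ
      have := repr_supp_le Q (diff_totalDegree hPm hQm (show 2 ≤ 1+1 by omega) α0) σ hσ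
      simp only [Finset.mem_insert, Finset.mem_singleton]
      omega
    have hexp := expand_repr Q (P.vec 2 α0 - Q.vec 2 α0) {0, 1} hsupp
    rw [show ({0, 1} : Finset ℕ) = insert 0 {1} from rfl,
      Finset.sum_insert (by simp), Finset.sum_singleton] at hexp
    have hdiff : v (P.vec 2 α0 - Q.vec 2 α0) = 0 := by
      rw [hexp, map_add, map_sum, map_sum]
      rw [Finset.sum_eq_zero (fun β _ => by
        rw [_root_.map_smul, smul_eq_mul, hent β, zero_mul]),
        Finset.sum_eq_zero (fun β _ => by
        rw [_root_.map_smul, smul_eq_mul, ops_apply_zero hQ (by omega) β, mul_zero]),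
        add_zero]
    have := map_sub v (P.vec 2 α0) (Q.vec 2 α0)
    rw [hdiff, ops_apply_zero hQ (by omega) α0] at this
    linarith

  · -- n = 1 case
    intro α
    have hsupp : ∀ σ ∈ (c 1 α).support, σ.1 ∈ ({0} : Finset ℕ) := by
      intro σ hσ
      have := repr_supp_le Q (diff_totalDegree hPm hQm (le_refl 1) α) σ hσ
      simpa using this
    have hexp := expand_repr Q (P.vec 1 α - Q.vec 1 α) {0} hsupp
    rw [Finset.sum_singleton] at hexp
    have : matVec (Matrix.of fun α β => c 1 α ⟨0, β⟩) (Q.vec 0) α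
        = ∑ β : Idx d 0, (c 1 α) ⟨0, β⟩ • Q.vec 0 β := rfl
    rw [this, ← hexp]
    ring
  · -- n ≥ 2 case
    intro n α
    have hsupp : ∀ σ ∈ (c (n+2) α).support, σ.1 ∈ ({n, n+1} : Finset ℕ) := by
      intro σ hσ
      have h1 := repr_supp_le Q (diff_totalDegree hPm hQm (show n+2 ≤ (n+1)+1 by omega) α) σ hσ
      have h2 : ¬ σ.1 + 3 ≤ n + 2 := by
        intro hle
        rcases σ with ⟨m, β⟩
        have := repr_zero_of_orth hQ hQm
          (fun β' => diff_orth hP hQ hdeg hlam (m := m) hle α β') β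
        exact Finsupp.mem_support_iff.mp hσ this
      simp only [Finset.mem_insert, Finset.mem_singleton]
      omega
    have hexp := expand_repr Q (P.vec (n+2) α - Q.vec (n+2) α) {n, n+1} hsupp
    rw [show ({n, n+1} : Finset ℕ) = insert n {n+1} from rfl,
      Finset.sum_insert (by simp), Finset.sum_singleton] at hexp
    have h1 : matVec (Matrix.of fun α β => c (n+2) α ⟨n+1, β⟩) (Q.vec (n+1)) α
        = ∑ β : Idx d (n+1), (c (n+2) α) ⟨n+1, β⟩ • Q.vec (n+1) β := rfl
    have h2 : matVec (Matrix.of fun α β => c (n+2) α ⟨n, β⟩) (Q.vec n) α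
        = ∑ β : Idx d n, (c (n+2) α) ⟨n, β⟩ • Q.vec n β := rfl
    rw [h1, h2]
    have := hexp
    rw [show P.vec (n+2) α = Q.vec (n+2) α + (P.vec (n+2) α - Q.vec (n+2) α) by ring, this]
    ring

end ForwardMain

section BackwardMain
variable {d : ℕ} {u v : MvPolynomial (Fin d) ℝ →ₗ[ℝ] ℝ} {P Q : PolySystem d}

lemma map_matVec {a b : Type} [Fintype b] (A : Matrix a b ℝ)
    (w : b → MvPolynomial (Fin d) ℝ) (i : a) :
    v (matVec A w i) = ∑ j, A i j * v (w j) := by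
  unfold matVec
  rw [map_sum]
  exact Finset.sum_congr rfl fun j _ => by rw [_root_.map_smul, smul_eq_mul]

lemma backward_dir (hP : IsOPS u P) (hPm : P.IsMonic) (hQ : IsOPS v Q) (hQm : Q.IsMonic)
    (M : (n : ℕ) → Matrix (Idx d (n + 1)) (Idx d n) ℝ)
    (Nmat : (n : ℕ) → Matrix (Idx d (n + 2)) (Idx d n) ℝ)
    (hN2 : Nmat 0 ≠ 0)
    (h1 : ∀ α : Idx d 1, P.vec 1 α = Q.vec 1 α + matVec (M 0) (Q.vec 0) α)
    (h2 : ∀ (n : ℕ) (α : Idx d (n + 2)),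
        P.vec (n + 2) α = Q.vec (n + 2) α + matVec (M (n + 1)) (Q.vec (n + 1)) α +
          matVec (Nmat n) (Q.vec n) α) :
    ∃ lam : MvPolynomial (Fin d) ℝ, lam.totalDegree = 2 ∧
        ∀ p : MvPolynomial (Fin d) ℝ, v p = u (lam * p) := by
  classical
  set g : (m : ℕ) → Idx d m → ℝ :=
    fun m => (Hmat u P m)⁻¹ *ᵥ (fun γ => v (P.vec m γ)) with hg
  set lam : MvPolynomial (Fin d) ℝ :=
    ∑ m ∈ Finset.range 3, ∑ γ : Idx d m, g m γ • P.vec m γ with hlamdef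
  -- F1
  have F1 : ∀ m, Hmat u P m *ᵥ g m = fun γ => v (P.vec m γ) := by
    intro m
    rw [hg]
    rw [Matrix.mulVec_mulVec, Matrix.mul_nonsing_inv _ (Hmat_isUnit hP hPm m),
      Matrix.one_mulVec]
  -- F2
  have F2 : ∀ (n : ℕ), 3 ≤ n → ∀ α : Idx d n, v (P.vec n α) = 0 := by
    intro n hn α
    obtain ⟨N, rfl⟩ : ∃ N, n = N + 3 := ⟨n - 3, by omega⟩
    rw [h2 (N + 1) α, map_add, map_add, ops_apply_zero hQ (by omega) α,
      map_matVec, map_matVec,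
      Finset.sum_eq_zero (fun β _ => by rw [ops_apply_zero hQ (by omega) β, mul_zero]),
      Finset.sum_eq_zero (fun β _ => by rw [ops_apply_zero hQ (by omega) β, mul_zero])]
    ring
  -- F3
  have F3 : ∀ (n : ℕ) (α : Idx d n), u (lam * P.vec n α) = v (P.vec n α) := by
    intro n α
    have hexpand : u (lam * P.vec n α) =
        ∑ m ∈ Finset.range 3, ∑ γ : Idx d m, g m γ * u (P.vec m γ * P.vec n α) := by
      rw [hlamdef, Finset.sum_mul, map_sum]
      refine Finset.sum_congr rfl fun m _ => ?_
      rw [Finset.sum_mul, map_sum]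
      exact Finset.sum_congr rfl fun γ _ => by
        rw [smul_mul_assoc, _root_.map_smul, smul_eq_mul]
    rw [hexpand]
    by_cases hn : n < 3
    · rw [Finset.sum_eq_single_of_mem n (Finset.mem_range.mpr hn)
        (fun m _ hm => Finset.sum_eq_zero fun γ _ => by
          rw [ops_orth_vec hP hm, mul_zero])]
      have : ∑ γ : Idx d n, g n γ * u (P.vec n γ * P.vec n α)
          = (Hmat u P n *ᵥ g n) α := by
        rw [Matrix.mulVec]
        simp only [dotProduct]
        refine Finset.sum_congr rfl fun γ _ => ?_
        rw [mul_comm, Hmat_symm]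
        rfl
      rw [this, F1 n]
    · push_neg at hn
      rw [Finset.sum_eq_zero (fun m hm => Finset.sum_eq_zero fun γ _ => by
        rw [ops_orth_vec hP (by have := Finset.mem_range.mp hm; omega), mul_zero])]
      rw [F2 n hn α]
  -- v = lam·u as functionals
  have Feq : ∀ p, v p = u (lam * p) := by
    have : u.comp (LinearMap.mulLeft ℝ lam) = v := by
      apply Module.Basis.ext (psBasis P)
      intro σ
      rw [psBasis_apply]
      show u (LinearMap.mulLeft ℝ lam (P.vec σ.1 σ.2)) = v (P.vec σ.1 σ.2)
      rw [LinearMap.mulLeft_apply]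
      exact F3 σ.1 σ.2
    intro p
    rw [← this]
    rfl
  -- F5 : value of v on ℙ_2
  have F5 : ∀ α : Idx d 2, v (P.vec 2 α) = Nmat 0 α default * v (Q.vec 0 default) := by
    intro α
    rw [h2 0 α, map_add, map_add, ops_apply_zero hQ (by omega) α,
      map_matVec, map_matVec,
      Finset.sum_eq_zero (fun β _ => by rw [ops_apply_zero hQ (by omega) β, mul_zero])]
    rw [Fintype.sum_unique]
    ring
  -- F6
  have F6 : ∃ α : Idx d 2, v (P.vec 2 α) ≠ 0 := by
    by_contra hcon
    push_neg at hcon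
    apply hN2
    ext α β
    have hβ : β = default := Unique.uniq _ β
    subst hβ
    have := hcon α
    rw [F5 α] at this
    rcases mul_eq_zero.mp this with h | h
    · simpa using h
    · exact absurd h (ops_apply_zero_ne hQ default)
  -- F7
  have F7 : ∃ γ0 : Idx d 2, g 2 γ0 ≠ 0 := by
    by_contra hcon
    push_neg at hcon
    obtain ⟨α, hα⟩ := F6
    apply hα
    have hzero : g 2 = 0 := funext hcon
    have := congrFun (F1 2) α
    rw [hzero, Matrix.mulVec_zero] at this
    exact this.symm
  obtain ⟨γ0, hγ0⟩ := F7
  set ν0 : Fin d →₀ ℕ := Finsupp.equivFunOnFinite.symm γ0.1 with hν0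
  have hν0sum : ∑ i, ν0 i = 2 := by
    have : ∀ i, ν0 i = γ0.1 i := fun i => rfl
    simp only [this]
    exact idx_sum γ0
  -- F8 : coefficient of lam at ν0 equals g 2 γ0
  have F8 : coeff ν0 lam = g 2 γ0 := by
    rw [hlamdef, coeff_sum]
    rw [show Finset.range 3 = {0, 1, 2} from rfl]
    rw [Finset.sum_insert (by simp), Finset.sum_insert (by simp), Finset.sum_singleton]
    have hlow : ∀ (m : ℕ), m < 2 → ∀ γ : Idx d m, coeff ν0 (g m γ • P.vec m γ) = 0 := by
      intro m hm γ
      rw [coeff_smul, coeff_zero_of_lt (by rw [P.degree_eq]; omega), smul_zero]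
    rw [coeff_sum, coeff_sum, coeff_sum,
      Finset.sum_eq_zero (fun γ _ => hlow 0 (by omega) γ),
      Finset.sum_eq_zero (fun γ _ => hlow 1 (by omega) γ)]
    have : ∀ γ : Idx d 2, coeff ν0 (g 2 γ • P.vec 2 γ) = if γ = γ0 then g 2 γ else 0 := by
      intro γ
      rw [coeff_smul, hPm 2 γ ν0 (by rw [sumNu]; exact hν0sum)]
      have hiff : (ν0 = Finsupp.equivFunOnFinite.symm γ.1) ↔ γ = γ0 := by
        constructor
        · intro h
          apply Subtype.ext
          have := congrArg (⇑Finsupp.equivFunOnFinite) h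
          simp only [Equiv.apply_symm_apply] at this
          exact this.symm
        · intro h
          rw [h, hν0]
      by_cases hcase : γ = γ0
      · rw [if_pos (hiff.mpr hcase), if_pos hcase, smul_eq_mul, mul_one]
      · rw [if_neg (fun h => hcase (hiff.mp h)), if_neg hcase, smul_eq_mul, mul_zero]
    rw [Finset.sum_congr rfl (fun γ _ => this γ), Finset.sum_ite_eq' Finset.univ γ0 (g 2)]
    simp
  -- total degree
  refine ⟨lam, le_antisymm ?_ ?_, Feq⟩
  · apply totalDegree_le_of_supp
    intro ν hν
    by_contra hgt
    push_neg at hgt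
    apply mem_support_iff.mp hν
    rw [hlamdef, coeff_sum]
    refine Finset.sum_eq_zero fun m hm => ?_
    rw [coeff_sum]
    refine Finset.sum_eq_zero fun γ _ => ?_
    rw [coeff_smul, coeff_zero_of_lt (by rw [P.degree_eq]; have := Finset.mem_range.mp hm; omega),
      smul_zero]
  · have : ν0 ∈ lam.support := mem_support_iff.mpr (by rw [F8]; exact hγ0)
    have h2le := supp_le_totalDegree this
    omega
end BackwardMain

/-- Theorem 4.1. Let `u` and `v` be quasi-definite moment functionals
with monic OPS `{ℙ_n}` and `{ℚ_n}` respectively.  Then there exists a polynomial `λ(x)`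
of exact total degree 2 with `v = λ(x)u` if and only if there exist matrices `M_n`
(`n ≥ 1`) and `N_n` (`n ≥ 2`), with `N_2 ≠ 0`, such that
`ℙ_n = ℚ_n + M_n ℚ_{n-1} + N_n ℚ_{n-2}` (the `N_n`-term being absent for `n = 1`).
Here `M (n)` stands for `M_{n+1}` and `Nmat (n)` for `N_{n+2}`. -/
theorem christoffel_characterization
    {d : ℕ} (hd : 1 ≤ d)
    (u v : MvPolynomial (Fin d) ℝ →ₗ[ℝ] ℝ)
    (P : PolySystem d) (hP : IsOPS u P) (hPmonic : P.IsMonic)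
    (Q : PolySystem d) (hQ : IsOPS v Q) (hQmonic : Q.IsMonic) :
    (∃ lam : MvPolynomial (Fin d) ℝ, lam.totalDegree = 2 ∧
        ∀ p : MvPolynomial (Fin d) ℝ, v p = u (lam * p)) ↔
    (∃ (M : (n : ℕ) → Matrix (Idx d (n + 1)) (Idx d n) ℝ)
        (Nmat : (n : ℕ) → Matrix (Idx d (n + 2)) (Idx d n) ℝ),
      Nmat 0 ≠ 0 ∧
      (∀ α : Idx d 1, P.vec 1 α = Q.vec 1 α + matVec (M 0) (Q.vec 0) α) ∧
      (∀ (n : ℕ) (α : Idx d (n + 2)),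
        P.vec (n + 2) α = Q.vec (n + 2) α + matVec (M (n + 1)) (Q.vec (n + 1)) α +
          matVec (Nmat n) (Q.vec n) α)) := by
  constructor
  · rintro ⟨lam, hdeg, hlam⟩
    exact forward_dir hP hPmonic hQ hQmonic lam hdeg hlam
  · rintro ⟨M, Nmat, hN2, h1, h2⟩
    exact backward_dir hP hPmonic hQ hQmonic M Nmat hN2 h1 h2
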